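/- Let f be a free polynomial of degree n with root y ∈ K_C[[x^{1/n}]] and characteristic exponents m₁ < ... < m_h. If m ∈ ℤ^e ∩ Supp(y), then m ∈ (nℤ)^e + m₁ℤ + ... + m_hℤ. -/

import Mathlib

/-- The subgroup `(nℤ)^e + m₁ℤ + ⋯ + m_iℤ` of `ℤ^e`. -/
def latticeSpan (e n : ℕ) {i : ℕ} (m : Fin i → Fin e → ℤ) : Set (Fin e → ℤ) :=
  {v | ∃ (a : Fin e → ℤ) (c : Fin i → ℤ), v = (n : ℤ) • a + ∑ j, c j • m j}

/-- `p` is the order of the series with coefficients `z`. -/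
def IsOrd {e : ℕ} {K : Type*} [Zero K]
    (le : (Fin e → ℤ) → (Fin e → ℤ) → Prop)
    (z : (Fin e → ℤ) → K) (p : Fin e → ℤ) : Prop :=
  z p ≠ 0 ∧ ∀ q, z q ≠ 0 → le p q

/-- if `y = ∑ c_p x^{p/n}` is a root of a free polynomial of
degree `n` with characteristic exponents `m₁ < ⋯ < m_h`, then every
`m ∈ ℤ^e ∩ Supp y` lies in `(nℤ)^e + m₁ℤ + ⋯ + m_hℤ`.  The automorphisms of
`L_n/L` act on `y` by multiplying the coefficient of `x^{p/n}` by `ω^p`, for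
`ω ∈ μ_n^e`, and by definition of the characteristic exponents the order of
`θ(y) - y` (whenever nonzero) is one of the `m_j`. -/


lemma aux_circle_zero {n : ℕ} (hn : 0 < n) (a : ℤ) :
    (((a : ℚ) / (n : ℚ) : ℚ) : AddCircle (1:ℚ)) = 0 ↔ (n : ℤ) ∣ a := by
  rw [AddCircle.coe_eq_zero_iff]
  constructor
  · rintro ⟨z, hz⟩
    refine ⟨z, ?_⟩
    have hn' : (n : ℚ) ≠ 0 := by positivity
    have : (z : ℚ) = (a : ℚ) / n := by simpa using hz
    field_simp at this
    have h2 : z * (n:ℤ) = a := by exact_mod_cast this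
    rw [← h2, mul_comm]
  · rintro ⟨z, rfl⟩
    refine ⟨z, ?_⟩
    have hn' : (n : ℚ) ≠ 0 := by positivity
    push_cast
    field_simp
    simp

lemma aux_torsion {n : ℕ} (hn : 0 < n) (u : AddCircle (1:ℚ)) (hu : n • u = 0) :
    ∃ k : ℤ, u = (((k : ℚ) / (n : ℚ) : ℚ) : AddCircle (1:ℚ)) := by
  induction u using QuotientAddGroup.induction_on with
  | H q =>
    have : ((n • q : ℚ) : AddCircle (1:ℚ)) = 0 := by
      rw [← hu]; rfl
    rw [AddCircle.coe_eq_zero_iff] at this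
    obtain ⟨z, hz⟩ := this
    refine ⟨z, ?_⟩
    have hn' : (n : ℚ) ≠ 0 := by positivity
    have : (z : ℚ) = n • q := by simpa using hz
    congr 1
    rw [this]
    field_simp
    rw [nsmul_eq_mul, mul_comm]

def latticeSubgroup (e n : ℕ) {i : ℕ} (m : Fin i → Fin e → ℤ) :
    AddSubgroup (Fin e → ℤ) where
  carrier := latticeSpan e n m
  zero_mem' := ⟨0, 0, by simp⟩
  add_mem' := by
    rintro v w ⟨a, c, rfl⟩ ⟨a', c', rfl⟩
    refine ⟨a + a', c + c', ?_⟩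
    simp only [Pi.add_apply, smul_add, add_smul, Finset.sum_add_distrib]
    abel
  neg_mem' := by
    rintro v ⟨a, c, rfl⟩
    refine ⟨-a, -c, ?_⟩
    simp only [Pi.neg_apply, smul_neg, neg_smul, neg_add, ← Finset.sum_neg_distrib]

lemma zpow_sum' {M : Type*} [Field M] {a : M} (ha : a ≠ 0) {ι : Type*} (s : Finset ι)
    (f : ι → ℤ) : a ^ (∑ i ∈ s, f i) = ∏ i ∈ s, a ^ f i := by
  classical
  induction s using Finset.induction with
  | empty => simp
  | insert x s hx ih => rw [Finset.sum_insert hx, Finset.prod_insert hx, zpow_add₀ ha, ih]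

theorem stmt_9 (K : Type*) [Field K] (e n h : ℕ) (hn : 0 < n)
    (ζ : K) (hζ : IsPrimitiveRoot ζ n)
    (le : (Fin e → ℤ) → (Fin e → ℤ) → Prop) (hlin : IsLinearOrder (Fin e → ℤ) le)
    (y : (Fin e → ℤ) → K) (m : Fin h → Fin e → ℤ)
    (hchar : ∀ ω : Fin e → K, (∀ i, ω i ^ n = 1) →
      (fun p => (∏ i, ω i ^ (p i)) * y p) ≠ y →
      ∃ j, IsOrd le (fun p => (∏ i, ω i ^ (p i)) * y p - y p) (m j)) :
    ∀ p, y p ≠ 0 → p ∈ latticeSpan e n m := by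
  intro p hp
  by_contra hpG
  have hζ0 : ζ ≠ 0 := by
    intro h0
    have h1 := hζ.pow_eq_one
    rw [h0, zero_pow hn.ne'] at h1
    exact zero_ne_one h1
  set G := latticeSubgroup e n m with hG
  have hpG' : (QuotientAddGroup.mk p : (Fin e → ℤ) ⧸ G) ≠ 0 := by
    rw [Ne, QuotientAddGroup.eq_zero_iff]
    exact hpG
  obtain ⟨c, hc⟩ := CharacterModule.exists_character_apply_ne_zero_of_ne_zero hpG'
  set χ : (Fin e → ℤ) →+ AddCircle (1 : ℚ) :=
    AddMonoidHom.comp c (QuotientAddGroup.mk' G) with hχdef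
  have hχ : ∀ q, χ q = c (QuotientAddGroup.mk q) := fun q => rfl
  have hker : ∀ v ∈ G, χ v = 0 := by
    intro v hv
    rw [hχ v, (QuotientAddGroup.eq_zero_iff v).2 hv, map_zero]
  have htor : ∀ v, n • χ v = 0 := by
    intro v
    rw [← map_nsmul]
    refine hker _ ⟨v, 0, ?_⟩
    simp [natCast_zsmul]
  choose k hk using fun i =>
    aux_torsion hn (χ (fun j => if i = j then (1:ℤ) else 0)) (htor _)
  set φ : ℚ →+ AddCircle (1 : ℚ) := QuotientAddGroup.mk' _ with hφdef
  have hφ : ∀ x : ℚ, (x : AddCircle (1:ℚ)) = φ x := fun x => rfl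
  have hkey : ∀ q : Fin e → ℤ,
      χ q = (((∑ i, k i * q i : ℤ) : ℚ) / (n : ℚ) : ℚ) := by
    intro q
    conv_lhs => rw [pi_eq_sum_univ q, map_sum]
    have : ∀ i : Fin e, i ∈ Finset.univ →
        χ (q i • fun j => if i = j then (1:ℤ) else 0)
          = φ ((q i : ℚ) * ((k i : ℚ) / (n : ℚ))) := by
      intro i _
      rw [map_zsmul, hk i, hφ, ← map_zsmul]
      congr 1
    rw [Finset.sum_congr rfl this, ← map_sum, hφ]
    congr 1
    push_cast
    rw [Finset.sum_div]
    exact Finset.sum_congr rfl fun i _ => by ring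
  have hdvd : ∀ q, χ q = 0 ↔ (n : ℤ) ∣ ∑ i, k i * q i := by
    intro q
    rw [hkey q]
    exact aux_circle_zero hn _
  have hprod : ∀ q : Fin e → ℤ,
      (∏ i, (ζ ^ k i) ^ (q i)) = ζ ^ (∑ i, k i * q i) := by
    intro q
    rw [zpow_sum' hζ0]
    exact Finset.prod_congr rfl fun i _ => (zpow_mul ζ (k i) (q i)).symm
  have hone : ∀ q, (∏ i, (ζ ^ k i) ^ (q i)) = 1 ↔ χ q = 0 := by
    intro q
    rw [hprod, hζ.zpow_eq_one_iff_dvd, hdvd]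
  set ω : Fin e → K := fun i => ζ ^ k i with hωdef
  have hωn : ∀ i, ω i ^ n = 1 := by
    intro i
    rw [hωdef]
    rw [← zpow_natCast (ζ ^ k i), ← zpow_mul, mul_comm, zpow_mul, zpow_natCast,
      hζ.pow_eq_one, one_zpow]
  have hχp : χ p ≠ 0 := by rw [hχ]; exact hc
  have hne : (fun q => (∏ i, ω i ^ (q i)) * y q) ≠ y := by
    intro heq
    have h1 := congrFun heq p
    rcases (mul_left_eq_self₀).1 h1 with h2 | h2
    · exact hχp ((hone p).1 h2)
    · exact hp h2
  obtain ⟨j, hj, -⟩ := hchar ω hωn hne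
  have hmj : χ (m j) = 0 := by
    refine hker _ ⟨0, Pi.single j 1, ?_⟩
    simp [Pi.single_apply, ite_smul]
  have h1 : ∏ i, ω i ^ (m j i) = 1 := (hone (m j)).2 hmj
  exact hj (by simp only [h1, one_mul, sub_self])
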